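/- Let T > 0 and d_s, d_u ∈ ℕ. Let A : [0,T] → ℝ^{d_s×d_s}, B : [0,T] → ℝ^{d_s×d_u}, Q : [0,T] → ℝ^{d_s×d_s} with symmetric values, R : [0,T] → ℝ^{d_u×d_u} with symmetric invertible values, σ : [0,T] → ℝ^{d_s×d_ω}, K : [0,T] → ℝ^{d_s×d_s}, and μ : [0,T] → ℝ^{d_s} be given. Set G := BR⁻¹Bᵀ and 𝒬 := (I−K)ᵀΠGΠ(I−K). Suppose Π : [0,T] → ℝ^{d_s×d_s} (symmetric-valued), α : [0,T] → ℝ^{d_s}, and β : [0,T] → ℝ are differentiable and satisfy −dΠ/dt = Q + AᵀΠ + ΠA − ΠGΠ + 𝒬, −dα/dt = (A − GΠ)ᵀα − 2𝒬μ, and −dβ/dt = tr(Πσσᵀ) − ¼αᵀGα + μᵀ𝒬μ on [0,T], with Π(T) = P, α(T) = 0, β(T) = 0. Define w(t,s) := sᵀΠ(t)s + α(t)ᵀs + β(t) and u*(t,s) := −½R(t)⁻¹B(t)ᵀ(2Π(t)K(t)(s − μ(t)) + 2Π(t)μ(t) + α(t)). Then for every t ∈ [0,T] and every s ∈ ℝ^{d_s}: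 −∂w/∂t(t,s) = sᵀQ(t)s + u*(t,s)ᵀR(t)u*(t,s) + (2Π(t)s + α(t))ᵀ(A(t)s + B(t)u*(t,s)) + tr(Π(t)σ(t)σ(t)ᵀ), and w(T,s) = sᵀPs. -/

import Mathlib

open Matrix Set

private lemma stmt_9_alg {ds du : ℕ} (A P K Q Qc G : Matrix (Fin ds) (Fin ds) ℝ)
    (B : Matrix (Fin ds) (Fin du) ℝ) (Rm Ri : Matrix (Fin du) (Fin du) ℝ)
    (s μ α : Fin ds → ℝ) (c : ℝ)
    (hP : Pᵀ = P) (hRi : Riᵀ = Ri) (hRiR : Ri * Rm = 1)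
    (hG : G = B * Ri * Bᵀ) (hQc : Qc = (1-K)ᵀ * (P*G*P) * (1-K)) :
    ∀ u : Fin du → ℝ, u = -((2⁻¹:ℝ) • ((Ri*Bᵀ) *ᵥ ((2:ℝ)•((P*K)*ᵥ(s-μ)) + (2:ℝ)•(P*ᵥμ) + α))) →
    s ⬝ᵥ ((-(Q + Aᵀ*P + P*A - P*G*P + Qc)) *ᵥ s)
      + (-((A - G*P)ᵀ *ᵥ α - (2:ℝ)•(Qc *ᵥ μ))) ⬝ᵥ s
      + (-(c - (4⁻¹:ℝ)*(α⬝ᵥ(G*ᵥα)) + μ⬝ᵥ(Qc*ᵥμ)))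
    = -(s⬝ᵥ(Q*ᵥs) + u⬝ᵥ(Rm*ᵥu) + ((2:ℝ)•(P*ᵥs)+α)⬝ᵥ(A*ᵥs + B*ᵥu) + c) := by
  rintro u rfl
  have flip2 : ∀ {n m : ℕ} (M : Matrix (Fin n) (Fin m) ℝ) (x : Fin m → ℝ) (y : Fin n → ℝ),
      (M *ᵥ x) ⬝ᵥ y = x ⬝ᵥ (Mᵀ *ᵥ y) := by
    intro n m M x y
    rw [Matrix.dotProduct_mulVec, Matrix.vecMul_transpose]
  have flip3 : ∀ (M : Matrix (Fin ds) (Fin ds) ℝ) (x y : Fin ds → ℝ),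
      x ⬝ᵥ (M *ᵥ y) = y ⬝ᵥ (Mᵀ *ᵥ x) := by
    intro M x y; rw [dotProduct_comm, flip2]
  have hcancel : ∀ {m : ℕ} (X : Matrix (Fin du) (Fin m) ℝ), Ri * (Rm * X) = X := by
    intro m X; rw [← Matrix.mul_assoc, hRiR, Matrix.one_mul]
  subst hG hQc
  simp only [flip2, Matrix.transpose_mul, Matrix.transpose_sub, Matrix.transpose_one,
    Matrix.transpose_transpose, hP, hRi, Matrix.mul_sub, Matrix.sub_mul, Matrix.mul_one,
    Matrix.one_mul, Matrix.mul_assoc, hcancel,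
    Matrix.mulVec_smul, Matrix.smul_mulVec, Matrix.mulVec_mulVec, Matrix.mulVec_add,
    Matrix.add_mulVec, Matrix.mulVec_sub, Matrix.sub_mulVec, Matrix.neg_mulVec,
    Matrix.mulVec_neg, Matrix.add_mul, Matrix.mul_add,
    dotProduct_add, add_dotProduct, dotProduct_sub, sub_dotProduct,
    dotProduct_neg, neg_dotProduct, dotProduct_smul, smul_dotProduct, smul_eq_mul]
  have h1 : s ⬝ᵥ (Aᵀ*P) *ᵥ s = s ⬝ᵥ (P*A) *ᵥ s := by
    rw [flip3]; simp [Matrix.transpose_mul, hP, Matrix.mul_assoc]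
  have h2 : s ⬝ᵥ (Kᵀ*(P*(B*(Ri*(Bᵀ*P))))) *ᵥ s = s ⬝ᵥ (P*(B*(Ri*(Bᵀ*(P*K))))) *ᵥ s := by
    rw [flip3]; simp [Matrix.transpose_mul, hP, hRi, Matrix.mul_assoc]
  have h3 : μ ⬝ᵥ (P*(B*(Ri*(Bᵀ*P)))) *ᵥ s = s ⬝ᵥ (P*(B*(Ri*(Bᵀ*P)))) *ᵥ μ := by
    rw [flip3]; simp [Matrix.transpose_mul, hP, hRi, Matrix.mul_assoc]
  have h4 : μ ⬝ᵥ (P*(B*(Ri*(Bᵀ*(P*K))))) *ᵥ s = s ⬝ᵥ (Kᵀ*(P*(B*(Ri*(Bᵀ*P))))) *ᵥ μ := by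
    rw [flip3]; simp [Matrix.transpose_mul, hP, hRi, Matrix.mul_assoc]
  have h5 : μ ⬝ᵥ (Kᵀ*(P*(B*(Ri*(Bᵀ*P))))) *ᵥ s = s ⬝ᵥ (P*(B*(Ri*(Bᵀ*(P*K))))) *ᵥ μ := by
    rw [flip3]; simp [Matrix.transpose_mul, hP, hRi, Matrix.mul_assoc]
  have h6 : μ ⬝ᵥ (Kᵀ*(P*(B*(Ri*(Bᵀ*(P*K)))))) *ᵥ s = s ⬝ᵥ (Kᵀ*(P*(B*(Ri*(Bᵀ*(P*K)))))) *ᵥ μ := by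
    rw [flip3]; simp [Matrix.transpose_mul, hP, hRi, Matrix.mul_assoc]
  have h7 : α ⬝ᵥ (B*(Ri*(Bᵀ*P))) *ᵥ s = s ⬝ᵥ (P*(B*(Ri*Bᵀ))) *ᵥ α := by
    rw [flip3]; simp [Matrix.transpose_mul, hP, hRi, Matrix.mul_assoc]
  have h8 : α ⬝ᵥ (B*(Ri*(Bᵀ*(P*K)))) *ᵥ s = s ⬝ᵥ (Kᵀ*(P*(B*(Ri*Bᵀ)))) *ᵥ α := by
    rw [flip3]; simp [Matrix.transpose_mul, hP, hRi, Matrix.mul_assoc]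
  have h9 : α ⬝ᵥ (B*(Ri*(Bᵀ*P))) *ᵥ μ = μ ⬝ᵥ (P*(B*(Ri*Bᵀ))) *ᵥ α := by
    rw [flip3]; simp [Matrix.transpose_mul, hP, hRi, Matrix.mul_assoc]
  have h10 : α ⬝ᵥ (B*(Ri*(Bᵀ*(P*K)))) *ᵥ μ = μ ⬝ᵥ (Kᵀ*(P*(B*(Ri*Bᵀ)))) *ᵥ α := by
    rw [flip3]; simp [Matrix.transpose_mul, hP, hRi, Matrix.mul_assoc]
  have h11 : μ ⬝ᵥ (Kᵀ*(P*(B*(Ri*(Bᵀ*P))))) *ᵥ μ = μ ⬝ᵥ (P*(B*(Ri*(Bᵀ*(P*K))))) *ᵥ μ := by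
    rw [flip3]; simp [Matrix.transpose_mul, hP, hRi, Matrix.mul_assoc]
  rw [h1, h2, h4, h5, h6, h7, h8, h9, h10, h11]
  rw [h3]
  ring

/-- Verification that the quadratic ansatz `w(t,s) = sᵀΠs + αᵀs + β` solves the
Hamilton–Jacobi–Bellman equation of the LQG problem with memory limitation pointwise,
at the optimal control `u*(t,s) = −½R⁻¹Bᵀ(2ΠK(s−μ) + 2Πμ + α)`, given that `Π` solves the
partially observable Riccati equation and `α`, `β` solve the associated linear ODEs. -/
theorem stmt_9 {ds du dω : ℕ} (T : ℝ) (hT : 0 < T)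
    (A : ℝ → Matrix (Fin ds) (Fin ds) ℝ)
    (B : ℝ → Matrix (Fin ds) (Fin du) ℝ)
    (Q : ℝ → Matrix (Fin ds) (Fin ds) ℝ) (hQsymm : ∀ t, (Q t).IsSymm)
    (R : ℝ → Matrix (Fin du) (Fin du) ℝ)
    (hRsymm : ∀ t, (R t).IsSymm) (hRinv : ∀ t, IsUnit (R t).det)
    (σ : ℝ → Matrix (Fin ds) (Fin dω) ℝ)
    (K : ℝ → Matrix (Fin ds) (Fin ds) ℝ)
    (μ : ℝ → Fin ds → ℝ)
    (Pmat : Matrix (Fin ds) (Fin ds) ℝ)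
    (G : ℝ → Matrix (Fin ds) (Fin ds) ℝ)
    (hG : ∀ t, G t = B t * (R t)⁻¹ * (B t)ᵀ)
    (P : ℝ → Matrix (Fin ds) (Fin ds) ℝ) (hPsymm : ∀ t, (P t).IsSymm)
    (Qc : ℝ → Matrix (Fin ds) (Fin ds) ℝ)
    (hQc : ∀ t, Qc t = (1 - K t)ᵀ * (P t * G t * P t) * (1 - K t))
    (α : ℝ → Fin ds → ℝ) (β : ℝ → ℝ)
    (hP : ∀ t ∈ Icc (0 : ℝ) T, ∀ i j, HasDerivAt (fun τ => P τ i j)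
      ((-(Q t + (A t)ᵀ * P t + P t * A t - P t * G t * P t + Qc t)) i j) t)
    (hα : ∀ t ∈ Icc (0 : ℝ) T, ∀ i, HasDerivAt (fun τ => α τ i)
      ((-((A t - G t * P t)ᵀ *ᵥ α t - (2 : ℝ) • (Qc t *ᵥ μ t))) i) t)
    (hβ : ∀ t ∈ Icc (0 : ℝ) T, HasDerivAt β
      (-((P t * (σ t * (σ t)ᵀ)).trace - (4⁻¹ : ℝ) * (α t ⬝ᵥ (G t *ᵥ α t))
        + μ t ⬝ᵥ (Qc t *ᵥ μ t))) t)
    (hPT : P T = Pmat) (hαT : α T = 0) (hβT : β T = 0) :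
    ∀ t ∈ Icc (0 : ℝ) T, ∀ s : Fin ds → ℝ, ∀ u : Fin du → ℝ,
      u = -((2⁻¹ : ℝ) • (((R t)⁻¹ * (B t)ᵀ) *ᵥ
            ((2 : ℝ) • ((P t * K t) *ᵥ (s - μ t)) + (2 : ℝ) • (P t *ᵥ μ t) + α t))) →
      HasDerivAt (fun τ => s ⬝ᵥ (P τ *ᵥ s) + α τ ⬝ᵥ s + β τ)
        (-(s ⬝ᵥ (Q t *ᵥ s) + u ⬝ᵥ (R t *ᵥ u)
          + ((2 : ℝ) • (P t *ᵥ s) + α t) ⬝ᵥ (A t *ᵥ s + B t *ᵥ u)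
          + (P t * (σ t * (σ t)ᵀ)).trace)) t
      ∧ s ⬝ᵥ (P T *ᵥ s) + α T ⬝ᵥ s + β T = s ⬝ᵥ (Pmat *ᵥ s) := by
  intro t ht s u hu
  refine ⟨?_, by simp [hPT, hαT, hβT]⟩
  set P' : Matrix (Fin ds) (Fin ds) ℝ :=
    -(Q t + (A t)ᵀ * P t + P t * A t - P t * G t * P t + Qc t) with hP'
  set α' : Fin ds → ℝ := -((A t - G t * P t)ᵀ *ᵥ α t - (2 : ℝ) • (Qc t *ᵥ μ t)) with hα'
  set β' : ℝ := -((P t * (σ t * (σ t)ᵀ)).trace - (4⁻¹ : ℝ) * (α t ⬝ᵥ (G t *ᵥ α t))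
      + μ t ⬝ᵥ (Qc t *ᵥ μ t)) with hβ'
  have hd1 : HasDerivAt (fun τ => s ⬝ᵥ (P τ *ᵥ s)) (s ⬝ᵥ (P' *ᵥ s)) t := by
    have e : ∀ (M : Matrix (Fin ds) (Fin ds) ℝ),
        s ⬝ᵥ (M *ᵥ s) = ∑ i, ∑ j, s i * (M i j * s j) := by
      intro M
      simp [dotProduct, Matrix.mulVec, Finset.mul_sum]
    have hsum : HasDerivAt (fun τ => ∑ i, ∑ j, s i * (P τ i j * s j))
        (∑ i, ∑ j, s i * (P' i j * s j)) t := by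
      refine HasDerivAt.fun_sum fun i _ => HasDerivAt.fun_sum fun j _ => ?_
      exact ((hP t ht i j).mul_const (s j)).const_mul (s i)
    simpa only [← e] using hsum
  have hd2 : HasDerivAt (fun τ => α τ ⬝ᵥ s) (α' ⬝ᵥ s) t := by
    have hsum : HasDerivAt (fun τ => ∑ i, α τ i * s i) (∑ i, α' i * s i) t :=
      HasDerivAt.fun_sum fun i _ => (hα t ht i).mul_const (s i)
    simpa only [dotProduct] using hsum
  have hd3 : HasDerivAt β β' t := hβ t ht
  have htot := (hd1.add hd2).add hd3
  have key : s ⬝ᵥ (P' *ᵥ s) + α' ⬝ᵥ s + β'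
      = -(s ⬝ᵥ (Q t *ᵥ s) + u ⬝ᵥ (R t *ᵥ u)
          + ((2 : ℝ) • (P t *ᵥ s) + α t) ⬝ᵥ (A t *ᵥ s + B t *ᵥ u)
          + (P t * (σ t * (σ t)ᵀ)).trace) := by
    refine stmt_9_alg (A t) (P t) (K t) (Q t) (Qc t) (G t) (B t) (R t) ((R t)⁻¹)
      s (μ t) (α t) ((P t * (σ t * (σ t)ᵀ)).trace) (hPsymm t) ?_ ?_ (hG t) (hQc t) u hu
    · rw [Matrix.transpose_nonsing_inv, (hRsymm t).eq]
    · exact Matrix.nonsing_inv_mul (R t) (hRinv t)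
  rw [← key]
  exact htot
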